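/- Let p, q ∈ AP be distinct, let I be an interval of nonnegative reals, and let c be a real with inf I < c < sup I. Let f be the signal with f(t) = {p} for t ∈ [0,c] and f(t) = {q} for t > c. Then, under the OLD satisfaction relation: f does not satisfy p U_I q (so f ⊨old ¬(p U_I q)), and f also does not satisfy (¬p) R_I (¬q). In particular, the old semantics violates the duality of until and release on the finitely variable signal f. -/

import Mathlib

open scoped NNReal ENNReal
open Set

namespace MITL

/-- A signal assigns to each nonnegative real time the set of atomic
propositions true at that time. -/
abbrev Signal (AP : Type*) := ℝ≥0 → Set AP

/-- The shifted signal `f^r`, defined by `f^r(t) = f(r+t)`. -/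
def shift {AP : Type*} (f : Signal AP) (r : ℝ≥0) : Signal AP := fun t => f (r + t)

/-- MTL formulas over atomic propositions `AP`; the timing constraints are
(intended to be) intervals of nonnegative reals. -/
inductive MTL (AP : Type*) where
  | top : MTL AP
  | bot : MTL AP
  | atom : AP → MTL AP
  | neg : MTL AP → MTL AP
  | disj : MTL AP → MTL AP → MTL AP
  | conj : MTL AP → MTL AP → MTL AP
  | until_ : MTL AP → MTL AP → Set ℝ≥0 → MTL AP
  | release : MTL AP → MTL AP → Set ℝ≥0 → MTL AP

variable {AP : Type*}

/-- The NEW satisfaction relation: `NSat f φ` means `f ⊨ φ`. -/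
def NSat : Signal AP → MTL AP → Prop
  | _, .top => True
  | _, .bot => False
  | f, .atom p => p ∈ f 0
  | f, .neg φ => ¬ NSat f φ
  | f, .disj φ1 φ2 => NSat f φ1 ∨ NSat f φ2
  | f, .conj φ1 φ2 => NSat f φ1 ∧ NSat f φ2
  | f, .until_ φ1 φ2 I =>
      ∃ t1 ∈ I, NSat (shift f t1) φ2 ∧ ∀ t2 ∈ Set.Ioo 0 t1, NSat (shift f t2) φ1
  | f, .release φ1 φ2 I =>
      (∀ t1 ∈ I, NSat (shift f t1) φ2) ∨
      (∃ t1 : ℝ≥0, 0 < t1 ∧ NSat (shift f t1) φ1 ∧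
        ∀ t2 ∈ Set.Ioc 0 t1 ∩ I, NSat (shift f t2) φ2) ∨
      (∃ t1 ∈ I ∪ {sInf I}, ∃ t2 ∈ I, t1 < t2 ∧
        ∀ t3 ∈ I, (t3 ≤ t1 → NSat (shift f t3) φ2) ∧
          (t1 < t3 → t3 ≤ t2 → NSat (shift f t3) φ1))

/-- Finite variability from the right of a signal `f` with respect to a formula
`φ`, relative to a satisfaction relation `Sat`. -/
def FinVarRight (Sat : Signal AP → MTL AP → Prop) (f : Signal AP) (φ : MTL AP) : Prop :=
  ∀ r : ℝ≥0,
    (∀ ε : ℝ≥0, 0 < ε → ∃ t ∈ Set.Ioo r (r + ε), Sat (shift f t) φ) →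
    ∃ ε : ℝ≥0, 0 < ε ∧ ∀ t ∈ Set.Ioo r (r + ε), Sat (shift f t) φ

/-- Finite variability from the left of a signal `f` with respect to a formula
`φ`, relative to a satisfaction relation `Sat`. -/
def FinVarLeft (Sat : Signal AP → MTL AP → Prop) (f : Signal AP) (φ : MTL AP) : Prop :=
  ∀ r : ℝ≥0, 0 < r →
    (∀ ε ∈ Set.Ioo 0 r, ∃ t ∈ Set.Ioo (r - ε) r, Sat (shift f t) φ) →
    ∃ ε ∈ Set.Ioo 0 r, ∀ t ∈ Set.Ioo (r - ε) r, Sat (shift f t) φ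

/-- The OLD satisfaction relation: `OSat f φ` means `f ⊨old φ`. -/
def OSat : Signal AP → MTL AP → Prop
  | _, .top => True
  | _, .bot => False
  | f, .atom p => p ∈ f 0
  | f, .neg φ => ¬ OSat f φ
  | f, .disj φ1 φ2 => OSat f φ1 ∨ OSat f φ2
  | f, .conj φ1 φ2 => OSat f φ1 ∧ OSat f φ2
  | f, .until_ φ1 φ2 I =>
      ∃ t1 ∈ I, OSat (shift f t1) φ2 ∧ ∀ t2 ∈ Set.Ioo 0 t1, OSat (shift f t2) φ1
  | f, .release φ1 φ2 I =>
      (∀ t1 ∈ I, OSat (shift f t1) φ2) ∨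
      (∃ t1 : ℝ≥0, 0 < t1 ∧ OSat (shift f t1) φ1 ∧
        ∀ t2 ∈ Set.Ioc 0 t1 ∩ I, OSat (shift f t2) φ2)

/-- The supremum of a set of nonnegative reals, computed in `ℝ≥0∞`
(so that sets unbounded above have supremum `∞`). -/
noncomputable def supE (I : Set ℝ≥0) : ℝ≥0∞ := sSup ((fun x : ℝ≥0 => (x : ℝ≥0∞)) '' I)

theorem old_semantics_not_dual (p q : AP) (hpq : p ≠ q)
    (I : Set ℝ≥0) (hI : I.OrdConnected)
    (c : ℝ≥0) (hc1 : sInf I < c) (hc2 : (c : ℝ≥0∞) < supE I)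
    (f : Signal AP) (hf : f = fun t => if t ≤ c then ({p} : Set AP) else ({q} : Set AP)) :
    ¬ OSat f (.until_ (.atom p) (.atom q) I) ∧
    OSat f (.neg (.until_ (.atom p) (.atom q) I)) ∧
    ¬ OSat f (.release (.neg (.atom p)) (.neg (.atom q)) I) := by
  subst hf
  set f : Signal AP := fun t => if t ≤ c then ({p} : Set AP) else {q} with hfdef
  have hp : ∀ t : ℝ≥0, p ∈ f t ↔ t ≤ c := by
    intro t; by_cases h : t ≤ c <;> simp [hfdef, h, hpq]
  have hq : ∀ t : ℝ≥0, q ∈ f t ↔ c < t := by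
    intro t; by_cases h : t ≤ c
    · simp [hfdef, h, Ne.symm hpq, not_lt.mpr h]
    · simp [hfdef, h, lt_of_not_ge h]
  obtain ⟨b, hb, hcb⟩ := lt_sSup_iff.mp hc2
  obtain ⟨t', ht'I, rfl⟩ := hb
  have hct' : c < t' := by simpa using hcb
  obtain ⟨s, hsI, hsc⟩ := exists_lt_of_csInf_lt ⟨t', ht'I⟩ hc1
  have hc0 : 0 < c := lt_of_le_of_lt zero_le hc1
  have hU : ¬ OSat f (.until_ (.atom p) (.atom q) I) := by
    rintro ⟨t1, ht1I, hqt1, hall⟩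
    have h1 : c < t1 := by
      have : q ∈ f (t1 + 0) := hqt1
      rw [add_zero] at this; exact (hq t1).mp this
    obtain ⟨t2, h2, h3⟩ := exists_between h1
    have := hall t2 ⟨lt_trans hc0 h2, h3⟩
    have hpm : p ∈ f (t2 + 0) := this
    rw [add_zero] at hpm
    exact absurd ((hp t2).mp hpm) (not_le.mpr h2)
  refine ⟨hU, hU, ?_⟩
  rintro (hall | ⟨t1, ht1pos, hpt1, hall2⟩)
  · have : ¬ q ∈ f (t' + 0) := hall t' ht'I
    rw [add_zero] at this
    exact this ((hq t').mpr hct')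
  · have hpt1' : ¬ p ∈ f (t1 + 0) := hpt1
    rw [add_zero] at hpt1'
    have hct1 : c < t1 := lt_of_not_ge fun h => hpt1' ((hp t1).mpr h)
    rcases le_or_gt t' t1 with h | h
    · have : ¬ q ∈ f (t' + 0) := hall2 t' ⟨⟨lt_trans hc0 hct', h⟩, ht'I⟩
      rw [add_zero] at this
      exact this ((hq t').mpr hct')
    · have ht1I : t1 ∈ I := hI.out hsI ht'I ⟨le_of_lt (lt_trans hsc hct1), le_of_lt h⟩
      have : ¬ q ∈ f (t1 + 0) := hall2 t1 ⟨⟨ht1pos, le_refl _⟩, ht1I⟩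
      rw [add_zero] at this
      exact this ((hq t1).mpr hct1)


end MITL
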